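/- arXiv:2107.11630 — 8 statements merged into one kernel-verified Lean document; each statement's English description precedes it below -/
import Mathlib

section
/- Let X be a metric space, C a positive natural number, and ε ≥ 0. Let g : X → Option (Fin C) be a detector and let f : X → Fin C be a classifier satisfying the minimum-distance-decoding construction with respect to g at radius ε/2, namely: (a) for every x and y, if g x = some y then f x = y; and (b) for every x with g x = none, if there exists x' with dist x x' ≤ ε/2 and g x' ≠ none, then there exists x' with dist x x' ≤ ε/2 and g x' = some (f x). Then for every point x ∈ X and label y ∈ Fin C: if there exists x̂ with dist x x̂ ≤ ε/2 and f x̂ ≠ y (i.e., f fails to robustly classify (x, y) at distance ε/2), then either g x ≠ some y, or there exists x'' with dist x x'' ≤ ε, g x'' ≠ some y, and g x'' ≠ none (i.e., g fails to be robust with detection on (x, y) at distance ε). -/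
theorem detector_failure_of_classifier_failure
    {X : Type*} [MetricSpace X] (C : ℕ) (hC : 0 < C) (ε : ℝ) (hε : 0 ≤ ε)
    (g : X → Option (Fin C)) (f : X → Fin C)
    (ha : ∀ x y, g x = some y → f x = y)
    (hb : ∀ x, g x = none →
      (∃ x', dist x x' ≤ ε / 2 ∧ g x' ≠ none) →
      ∃ x', dist x x' ≤ ε / 2 ∧ g x' = some (f x))
    (x : X) (y : Fin C)
    (hfail : ∃ xhat, dist x xhat ≤ ε / 2 ∧ f xhat ≠ y) :
    g x ≠ some y ∨ ∃ x'', dist x x'' ≤ ε ∧ g x'' ≠ some y ∧ g x'' ≠ none := by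
  obtain ⟨xhat, hd, hfy⟩ := hfail
  by_cases hgx : g x = some y
  · right
    cases hgxh : g xhat with
    | some z =>
      refine ⟨xhat, by linarith, ?_, by simp [hgxh]⟩
      have := ha xhat z hgxh
      simp [hgxh]
      intro h; exact hfy (h ▸ this)
    | none =>
      obtain ⟨x', hx'd, hx'⟩ := hb xhat hgxh ⟨x, by rw [dist_comm]; exact hd, by simp [hgx]⟩
      refine ⟨x', ?_, ?_, by simp [hx']⟩
      · calc dist x x' ≤ dist x xhat + dist xhat x' := dist_triangle _ _ _
          _ ≤ ε := by linarith
      · rw [hx']; intro h; exact hfy (Option.some_injective _ h)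
  · exact Or.inl hgx
end

section
/- Let X be a metric space, C a positive natural number, and ε ≥ 0. Let g : X → Option (Fin C) be a detector and let f : X → Fin C be a classifier satisfying the minimum-distance-decoding construction with respect to g at radius ε/2 (as in conditions (a) and (b)). For every point x ∈ X and label y ∈ Fin C: if g is robust with detection on (x, y) at distance ε — that is, g x = some y and every x'' with dist x x'' ≤ ε satisfies g x'' ∈ {some y, none} — then f robustly classifies (x, y) at distance ε/2, i.e., every x̂ with dist x x̂ ≤ ε/2 satisfies f x̂ = y. -/
theorem robust_classification_of_robust_detection
    {X : Type*} [MetricSpace X] (C : ℕ) (hC : 0 < C) (ε : ℝ) (hε : 0 ≤ ε)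
    (g : X → Option (Fin C)) (f : X → Fin C)
    (ha : ∀ x y, g x = some y → f x = y)
    (hb : ∀ x, g x = none →
      (∃ x', dist x x' ≤ ε / 2 ∧ g x' ≠ none) →
      ∃ x', dist x x' ≤ ε / 2 ∧ g x' = some (f x))
    (x : X) (y : Fin C)
    (hgx : g x = some y)
    (hrob : ∀ x'', dist x x'' ≤ ε → g x'' = some y ∨ g x'' = none) :
    ∀ xhat, dist x xhat ≤ ε / 2 → f xhat = y := by
  intro xhat hd
  have hhalf : ε / 2 ≤ ε := by linarith
  cases hg : g xhat with
  | some z =>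
    rcases hrob xhat (hd.trans hhalf) with h | h
    · exact ha xhat y h
    · rw [hg] at h; exact absurd h (by simp)
  | none =>
    obtain ⟨x', hx', hgx'⟩ := hb xhat hg
      ⟨x, by rw [dist_comm]; exact hd, by rw [hgx]; simp⟩
    have hdx : dist x x' ≤ ε := by
      calc dist x x' ≤ dist x xhat + dist xhat x' := dist_triangle _ _ _
        _ ≤ ε := by linarith
    rcases hrob x' hdx with h | h
    · rw [hgx'] at h; exact (Option.some_inj.mp h)
    · rw [hgx'] at h; exact absurd h (by simp)
end

section
/- (Theorem 1, existence form.) Let X be a metric space, C a positive natural number, ε ≥ 0, and μ a measure on X × Fin C. For every detector g : X → Option (Fin C) there exists a classifier f : X → Fin C such that both: (i) μ {(x, y) | f x ≠ y} ≤ μ {(x, y) | g x ≠ some y}, and (ii) μ {(x, y) | ∃ x̂, dist x x̂ ≤ ε/2 ∧ f x̂ ≠ y} ≤ μ {(x, y) | g x ≠ some y ∨ ∃ x̂, dist x x̂ ≤ ε ∧ g x̂ ≠ some y ∧ g x̂ ≠ none}. That is, a detector achieving risk α and robust risk with detection β at distance ε yields a classifier achieving risk at most α and robust risk at most β at distance ε/2.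 -/
theorem robust_detection_implies_robust_classification
    {X : Type*} [MetricSpace X] [MeasurableSpace X] (C : ℕ) (hC : 0 < C) (ε : ℝ) (hε : 0 ≤ ε)
    (μ : MeasureTheory.Measure (X × Fin C))
    (g : X → Option (Fin C)) :
    ∃ f : X → Fin C,
      μ {p : X × Fin C | f p.1 ≠ p.2} ≤ μ {p : X × Fin C | g p.1 ≠ some p.2} ∧
      μ {p : X × Fin C | ∃ xhat, dist p.1 xhat ≤ ε / 2 ∧ f xhat ≠ p.2} ≤
        μ {p : X × Fin C | g p.1 ≠ some p.2 ∨
          ∃ xhat, dist p.1 xhat ≤ ε ∧ g xhat ≠ some p.2 ∧ g xhat ≠ none} := by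
  classical
  set f : X → Fin C := fun x =>
    match hx : g x with
    | some c => c
    | none =>
      if h : ∃ p : X × Fin C, dist x p.1 ≤ ε / 2 ∧ g p.1 = some p.2 then
        (Classical.choose h).2
      else ⟨0, hC⟩ with hf
  have hfg : ∀ x c, g x = some c → f x = c := by
    intro x c hx
    simp only [hf]
    split
    · rename_i c' hc'; rw [hx] at hc'; exact (Option.some_injective _ hc').symm
    · rename_i hc'; rw [hx] at hc'; exact absurd hc' (by simp)
  refine ⟨f, ?_, ?_⟩
  · apply MeasureTheory.measure_mono
    intro p hp
    simp only [Set.mem_setOf_eq] at *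
    intro hgp
    exact hp (hfg _ _ hgp)
  · apply MeasureTheory.measure_mono
    rintro ⟨x, y⟩ ⟨xhat, hd, hne⟩
    simp only [Set.mem_setOf_eq]
    by_cases hgx : g x = some y
    · right
      cases hgxh : g xhat with
      | some c =>
        exact ⟨xhat, le_trans hd (by linarith), by
          rw [hgxh]
          refine ⟨fun hc => hne ?_, by simp⟩
          rw [hfg _ _ hgxh]; exact Option.some_injective _ hc⟩
      | none =>
        have h : ∃ p : X × Fin C, dist xhat p.1 ≤ ε / 2 ∧ g p.1 = some p.2 :=
          ⟨(x, y), by rwa [dist_comm], hgx⟩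
        have hfx : f xhat = (Classical.choose h).2 := by
          simp only [hf]
          split
          · rename_i c' hc'; rw [hgxh] at hc'; exact absurd hc' (by simp)
          · rw [dif_pos h]
        obtain ⟨hd', hg'⟩ := Classical.choose_spec h
        refine ⟨(Classical.choose h).1, ?_, ?_, ?_⟩
        · calc dist x (Classical.choose h).1 ≤ dist x xhat + dist xhat (Classical.choose h).1 :=
            dist_triangle _ _ _
          _ ≤ ε / 2 + ε / 2 := add_le_add hd hd'
          _ = ε := by ring
        · rw [hg']; intro hc
          exact hne (by rw [hfx, Option.some_injective _ hc])
        · rw [hg']; simp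
    · left; exact hgx
end

section
/- Let E be a real normed vector space, C a positive natural number, and ε ≥ 0. Let f : E → Fin C be a classifier and define the detector g : E → Option (Fin C) by g x = none if there exists x' with dist x x' ≤ ε/2 and f x' ≠ f x, and g x = some (f x) otherwise. Then for every x ∈ E and y ∈ Fin C: if f robustly classifies (x, y) at distance ε/2 (every point within distance ε/2 of x is classified as y by f), then g is robust with detection on (x, y) at distance ε; that is, g x = some y and every x̂ with dist x x̂ ≤ ε satisfies g x̂ = some y or g x̂ = none. -/
theorem certified_detector_robust_with_detection
    {E : Type*} [NormedAddCommGroup E] [NormedSpace ℝ E]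
    (C : ℕ) (hC : 0 < C) (ε : ℝ) (hε : 0 ≤ ε)
    (f : E → Fin C) (g : E → Option (Fin C))
    (hg_rej : ∀ x, (∃ x', dist x x' ≤ ε / 2 ∧ f x' ≠ f x) → g x = none)
    (hg_acc : ∀ x, ¬(∃ x', dist x x' ≤ ε / 2 ∧ f x' ≠ f x) → g x = some (f x))
    (x : E) (y : Fin C)
    (hrob : ∀ xhat, dist x xhat ≤ ε / 2 → f xhat = y) :
    g x = some y ∧ ∀ xhat, dist x xhat ≤ ε → g xhat = some y ∨ g xhat = none := by
  have hfx : f x = y := hrob x (by simpa using by positivity)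
  constructor
  · rw [hg_acc x, hfx]
    rintro ⟨x', hd, hne⟩
    exact hne ((hrob x' hd).trans hfx.symm)
  · intro xhat hd
    by_cases h : ∃ x', dist xhat x' ≤ ε / 2 ∧ f x' ≠ f xhat
    · exact Or.inr (hg_rej xhat h)
    · left
      rw [hg_acc xhat h]
      push_neg at h
      have hm1 : dist x (midpoint ℝ x xhat) ≤ ε / 2 := by
        rw [dist_left_midpoint, Real.norm_two]
        linarith
      have hm2 : dist xhat (midpoint ℝ x xhat) ≤ ε / 2 := by
        rw [dist_right_midpoint, Real.norm_two]
        linarith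
      rw [← h _ hm2, hrob _ hm1]
end

section
/- (ε/2-robust classification implies ε-robust detection, measure version.) Let E be a real normed vector space, C a positive natural number, ε ≥ 0, and μ a measure on E × Fin C. Let f : E → Fin C be a classifier and define the detector g : E → Option (Fin C) by g x = none if there exists x' with dist x x' ≤ ε/2 and f x' ≠ f x, and g x = some (f x) otherwise. Then both: (i) the risk of g is at most the robust risk of f at distance ε/2, i.e. μ {(x, y) | g x ≠ some y} ≤ μ {(x, y) | ∃ x̂, dist x x̂ ≤ ε/2 ∧ f x̂ ≠ y}; and (ii) the robust risk with detection of g at distance ε is at most the robust risk of f at distance ε/2, i.e. μ {(x, y) | g x ≠ some y ∨ ∃ x̂, dist x x̂ ≤ ε ∧ g x̂ ≠ some y ∧ g x̂ ≠ none} ≤ μ {(x, y) | ∃ x̂, dist x x̂ ≤ ε/2 ∧ f x̂ ≠ y}. -/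
theorem certified_detector_risk_bounds
    {E : Type*} [NormedAddCommGroup E] [NormedSpace ℝ E] [MeasurableSpace E]
    (C : ℕ) (hC : 0 < C) (ε : ℝ) (hε : 0 ≤ ε)
    (μ : MeasureTheory.Measure (E × Fin C))
    (f : E → Fin C) (g : E → Option (Fin C))
    (hg_rej : ∀ x, (∃ x', dist x x' ≤ ε / 2 ∧ f x' ≠ f x) → g x = none)
    (hg_acc : ∀ x, ¬(∃ x', dist x x' ≤ ε / 2 ∧ f x' ≠ f x) → g x = some (f x)) :
    μ {p : E × Fin C | g p.1 ≠ some p.2} ≤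
      μ {p : E × Fin C | ∃ xhat, dist p.1 xhat ≤ ε / 2 ∧ f xhat ≠ p.2} ∧
    μ {p : E × Fin C | g p.1 ≠ some p.2 ∨
        ∃ xhat, dist p.1 xhat ≤ ε ∧ g xhat ≠ some p.2 ∧ g xhat ≠ none} ≤
      μ {p : E × Fin C | ∃ xhat, dist p.1 xhat ≤ ε / 2 ∧ f xhat ≠ p.2} := by
  have key : ∀ x (y : Fin C), g x ≠ some y → ∃ z, dist x z ≤ ε / 2 ∧ f z ≠ y := by
    intro x y hxy
    by_cases h : ∃ x', dist x x' ≤ ε / 2 ∧ f x' ≠ f x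
    · obtain ⟨x', hd, hne⟩ := h
      by_cases hfy : f x = y
      · exact ⟨x', hd, hfy ▸ hne⟩
      · exact ⟨x, by simp; positivity, hfy⟩
    · have := hg_acc x h
      refine ⟨x, by simp; positivity, ?_⟩
      intro hfy
      exact hxy (by rw [this, hfy])
  have key2 : ∀ x (y : Fin C),
      (g x ≠ some y ∨ ∃ xhat, dist x xhat ≤ ε ∧ g xhat ≠ some y ∧ g xhat ≠ none) →
      ∃ z, dist x z ≤ ε / 2 ∧ f z ≠ y := by
    intro x y h
    rcases h with h | ⟨xh, hd, hne, hnn⟩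
    · exact key x y h
    · have hacc : ¬∃ x', dist xh x' ≤ ε / 2 ∧ f x' ≠ f xh := fun hc => hnn (hg_rej xh hc)
      have hgxh : g xh = some (f xh) := hg_acc xh hacc
      have hfxh : f xh ≠ y := fun he => hne (by rw [hgxh, he])
      have h2 : ‖(2:ℝ)‖⁻¹ * dist x xh ≤ ε / 2 := by
        rw [show ‖(2:ℝ)‖ = 2 by simp]
        linarith
      refine ⟨midpoint ℝ x xh, ?_, ?_⟩
      · rw [dist_left_midpoint]; exact h2
      · have : f (midpoint ℝ x xh) = f xh := by
          by_contra hc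
          apply hacc
          refine ⟨midpoint ℝ x xh, ?_, hc⟩
          rw [dist_right_midpoint]; exact h2
        rw [this]; exact hfxh
  constructor
  · exact MeasureTheory.measure_mono fun p hp => key p.1 p.2 hp
  · exact MeasureTheory.measure_mono fun p hp => key2 p.1 p.2 hp
end

section
/- (Theorem 2, existence form.) Let E be a real normed vector space, C a positive natural number, ε ≥ 0, and μ a measure on E × Fin C. For every classifier f : E → Fin C there exists a detector g : E → Option (Fin C) such that both its risk and its robust risk with detection at distance ε are bounded by the robust risk of f at distance ε/2: μ {(x, y) | g x ≠ some y} ≤ μ {(x, y) | ∃ x̂, dist x x̂ ≤ ε/2 ∧ f x̂ ≠ y}, and μ {(x, y) | g x ≠ some y ∨ ∃ x̂, dist x x̂ ≤ ε ∧ g x̂ ≠ some y ∧ g x̂ ≠ none} ≤ μ {(x, y) | ∃ x̂, dist x x̂ ≤ ε/2 ∧ f x̂ ≠ y}. -/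
open Classical in
theorem robust_classification_implies_robust_detection
    {E : Type*} [NormedAddCommGroup E] [NormedSpace ℝ E] [MeasurableSpace E]
    (C : ℕ) (hC : 0 < C) (ε : ℝ) (hε : 0 ≤ ε)
    (μ : MeasureTheory.Measure (E × Fin C))
    (f : E → Fin C) :
    ∃ g : E → Option (Fin C),
      μ {p : E × Fin C | g p.1 ≠ some p.2} ≤
        μ {p : E × Fin C | ∃ xhat, dist p.1 xhat ≤ ε / 2 ∧ f xhat ≠ p.2} ∧
      μ {p : E × Fin C | g p.1 ≠ some p.2 ∨
          ∃ xhat, dist p.1 xhat ≤ ε ∧ g xhat ≠ some p.2 ∧ g xhat ≠ none} ≤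
        μ {p : E × Fin C | ∃ xhat, dist p.1 xhat ≤ ε / 2 ∧ f xhat ≠ p.2} := by
  set g : E → Option (Fin C) :=
    fun x => if ∀ z, dist x z ≤ ε / 2 → f z = f x then some (f x) else none with hg
  have key : ∀ x (y : Fin C), g x ≠ some y → ∃ z, dist x z ≤ ε / 2 ∧ f z ≠ y := by
    intro x y h
    have hd : dist x x ≤ ε / 2 := by
      rw [dist_self]; positivity
    by_cases hc : ∀ z, dist x z ≤ ε / 2 → f z = f x
    · exact ⟨x, hd, fun hfy => h ((if_pos hc).trans (congrArg some hfy))⟩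
    · push_neg at hc
      obtain ⟨z, hz, hfz⟩ := hc
      by_cases hxy : f x = y
      · exact ⟨z, hz, hxy ▸ hfz⟩
      · exact ⟨x, hd, hxy⟩
  refine ⟨g, MeasureTheory.measure_mono fun p hp => key p.1 p.2 hp, ?_⟩
  apply MeasureTheory.measure_mono
  rintro ⟨x, y⟩ (h | ⟨z, hz, hne, hnn⟩)
  · exact key x y h
  · -- g z = some (f z) and f z ≠ y; use midpoint
    by_cases hc : ∀ w, dist z w ≤ ε / 2 → f w = f z
    · have hgz : g z = some (f z) := if_pos hc
      have hfzy : f z ≠ y := by intro hh; exact hne (hgz.trans (by rw [hh]))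
      refine ⟨midpoint ℝ x z, ?_, ?_⟩
      · rw [dist_left_midpoint (𝕜 := ℝ)]
        simp only [Real.norm_two]
        simp only [Prod.fst] at hz ⊢
        linarith [hz]
      · have : dist z (midpoint ℝ x z) ≤ ε / 2 := by
          rw [midpoint_comm, dist_left_midpoint (𝕜 := ℝ)]
          simp only [Real.norm_two]
          have h2 : dist z x ≤ ε := dist_comm x z ▸ hz
          linarith
        rw [hc _ this]; exact hfzy
    · exact absurd (if_neg hc) hnn
end

section
/- (Hardness transfer from classifiers to detectors.) Let X be a metric space, C a positive natural number, ε ≥ 0, μ a measure on X × Fin C, and α, β ∈ ℝ≥0∞. Suppose that every classifier f : X → Fin C with risk μ {(x, y) | f x ≠ y} ≤ α has robust risk at distance ε/2 at least β, i.e. μ {(x, y) | ∃ x̂, dist x x̂ ≤ ε/2 ∧ f x̂ ≠ y} ≥ β. Then every detector g : X → Option (Fin C) with risk μ {(x, y) | g x ≠ some y} ≤ α has robust risk with detection at distance ε at least β, i.e. μ {(x, y) | g x ≠ some y ∨ ∃ x̂, dist x x̂ ≤ ε ∧ g x̂ ≠ some y ∧ g x̂ ≠ none} ≥ β. -/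
theorem hardness_transfer_classifier_to_detector
    {X : Type*} [MetricSpace X] [MeasurableSpace X] (C : ℕ) (hC : 0 < C) (ε : ℝ) (hε : 0 ≤ ε)
    (μ : MeasureTheory.Measure (X × Fin C)) (α β : ENNReal)
    (hcls : ∀ f : X → Fin C, μ {p : X × Fin C | f p.1 ≠ p.2} ≤ α →
      β ≤ μ {p : X × Fin C | ∃ xhat, dist p.1 xhat ≤ ε / 2 ∧ f xhat ≠ p.2}) :
    ∀ g : X → Option (Fin C), μ {p : X × Fin C | g p.1 ≠ some p.2} ≤ α →
      β ≤ μ {p : X × Fin C | g p.1 ≠ some p.2 ∨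
        ∃ xhat, dist p.1 xhat ≤ ε ∧ g xhat ≠ some p.2 ∧ g xhat ≠ none} := by
  intro g hg
  classical
  set f : X → Fin C := fun x =>
    match g x with
    | some y => y
    | none => if h : ∃ y, ∃ xhat, dist x xhat ≤ ε / 2 ∧ g xhat = some y
        then h.choose else ⟨0, hC⟩ with hf
  have hfeq : ∀ x y, g x = some y → f x = y := by
    intro x y hxy
    simp only [hf, hxy]
  have hrisk : μ {p : X × Fin C | f p.1 ≠ p.2} ≤ α := by
    refine le_trans (MeasureTheory.measure_mono ?_) hg
    intro p hp hgp
    exact hp (hfeq _ _ hgp)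
  refine le_trans (hcls f hrisk) (MeasureTheory.measure_mono ?_)
  rintro ⟨x, y⟩ ⟨xhat, hd, hne⟩
  by_cases hgx : g x = some y
  · right
    cases hgxhat : g xhat with
    | some y' =>
      refine ⟨xhat, by linarith, ?_, by simp [hgxhat]⟩
      rw [hgxhat]
      intro hcon
      exact hne (by rw [hfeq xhat y' hgxhat]; exact Option.some_injective _ hcon)
    | none =>
      have hex : ∃ y0, ∃ x', dist xhat x' ≤ ε / 2 ∧ g x' = some y0 :=
        ⟨y, x, by rw [dist_comm]; exact hd, hgx⟩
      have hfx : f xhat = hex.choose := by simp only [hf, hgxhat, dif_pos hex]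
      obtain ⟨x', hdx', hgx'⟩ := hex.choose_spec
      have hney : hex.choose ≠ y := fun hq => hne (hfx.trans hq)
      refine ⟨x', ?_, ?_, by simp [hgx']⟩
      · have := dist_triangle x xhat x'
        linarith
      · rw [hgx']
        exact fun hcon => hney (Option.some_injective _ hcon)
  · left
    exact hgx
end

section
/- (Hardness transfer from detectors to classifiers.) Let E be a real normed vector space, C a positive natural number, ε ≥ 0, μ a measure on E × Fin C, and β ∈ ℝ≥0∞. Suppose that every detector g : E → Option (Fin C) has robust risk with detection at distance ε at least β, i.e. μ {(x, y) | g x ≠ some y ∨ ∃ x̂, dist x x̂ ≤ ε ∧ g x̂ ≠ some y ∧ g x̂ ≠ none} ≥ β. Then every classifier f : E → Fin C has robust risk at distance ε/2 at least β, i.e. μ {(x, y) | ∃ x̂, dist x x̂ ≤ ε/2 ∧ f x̂ ≠ y} ≥ β. -/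
theorem hardness_transfer_detector_to_classifier
    {E : Type*} [NormedAddCommGroup E] [NormedSpace ℝ E] [MeasurableSpace E]
    (C : ℕ) (hC : 0 < C) (ε : ℝ) (hε : 0 ≤ ε)
    (μ : MeasureTheory.Measure (E × Fin C)) (β : ENNReal)
    (hdet : ∀ g : E → Option (Fin C),
      β ≤ μ {p : E × Fin C | g p.1 ≠ some p.2 ∨
        ∃ xhat, dist p.1 xhat ≤ ε ∧ g xhat ≠ some p.2 ∧ g xhat ≠ none}) :
    ∀ f : E → Fin C,
      β ≤ μ {p : E × Fin C | ∃ xhat, dist p.1 xhat ≤ ε / 2 ∧ f xhat ≠ p.2} := by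
  classical
  intro f
  set g : E → Option (Fin C) := fun x =>
    if ∃ z, dist x z ≤ ε / 2 ∧ f z ≠ f x then none else some (f x) with hg
  refine le_trans (hdet g) (MeasureTheory.measure_mono ?_)
  rintro ⟨x, y⟩ (h | ⟨xhat, hd, hne, hnn⟩)
  · simp only [hg] at h
    by_cases hex : ∃ z, dist x z ≤ ε / 2 ∧ f z ≠ f x
    · obtain ⟨z, hz, hzne⟩ := hex
      by_cases hfy : f x = y
      · exact ⟨z, hz, hfy ▸ hzne⟩
      · exact ⟨x, by rw [dist_self]; positivity, hfy⟩
    · rw [if_neg hex] at h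
      exact ⟨x, by rw [dist_self]; positivity, fun hxy => h (by rw [hxy])⟩
  · simp only [hg] at hne hnn
    have hex : ¬ ∃ z, dist xhat z ≤ ε / 2 ∧ f z ≠ f xhat := by
      intro hx; rw [if_pos hx] at hnn; exact hnn rfl
    rw [if_neg hex] at hne
    push_neg at hex
    refine ⟨midpoint ℝ x xhat, ?_, ?_⟩
    · simp only at hd
      rw [dist_comm, dist_midpoint_left]
      rw [Real.norm_two]
      linarith [dist_comm x xhat]
    · have h1 : f (midpoint ℝ x xhat) = f xhat := by
        refine hex _ ?_
        rw [dist_comm, dist_midpoint_right, dist_comm]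
        rw [Real.norm_two]
        simp only at hd
        linarith [dist_comm x xhat]
      rw [h1]; exact fun hc => hne (by rw [hc])
end
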